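/- Let (σ_k) be nonincreasing with σ_k > 0 and let t_k > 0 be arbitrary step sizes. Then for the optimistic extragradient iterates, for every z ∈ Z and every k ≥ 1: ½‖z^{k+1} − z‖² ≤ ½‖z^k − z‖² − ½‖z^{k+1/2} − z^k‖² + (t_k²/2)‖V_k(z^{k−1/2}) − V_k(z^{k+1/2})‖² + t_k⟨V_k(z^{k+1/2}), z − z^{k+1/2}⟩ + t_k(G_k(z) − G_k(z^{k+1/2})). -/
import Mathlib


noncomputable section

open scoped RealInnerProductSpace
open Filter Topology

variable {Z : Type*} [NormedAddCommGroup Z] [InnerProductSpace ℝ Z] [CompleteSpace Z]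

/-- Effective domain of an extended-real-valued function. -/
def edom {Z : Type*} (g : Z → EReal) : Set Z := {z | g z < ⊤}

/-- `g` is proper, convex and lower semicontinuous. -/
structure ProperConvexLsc (g : Z → EReal) : Prop where
  ne_bot : ∀ z, g z ≠ ⊥
  proper : ∃ z, g z < ⊤
  convex : ∀ x y : Z, ∀ a b : ℝ, 0 ≤ a → 0 ≤ b → a + b = 1 →
    g (a • x + b • y) ≤ (a : EReal) * g x + (b : EReal) * g y
  lsc : LowerSemicontinuous g

/-- Monotonicity of an operator on a real Hilbert space. -/
def IsMonotoneOp (F : Z → Z) : Prop := ∀ x y : Z, 0 ≤ ⟪F x - F y, x - y⟫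

/-- Lipschitz continuity with (real) constant `L`. -/
def IsLipOp (L : ℝ) (F : Z → Z) : Prop := ∀ x y : Z, ‖F x - F y‖ ≤ L * ‖x - y‖

/-- The bifunction `H^{(F,g)}(z,y) = ⟪F y, z - y⟫ + g z - g y`. -/
def Hb (F : Z → Z) (g : Z → EReal) (z y : Z) : EReal :=
  ((⟪F y, z - y⟫ : ℝ) : EReal) + g z - g y

/-- The localized dual gap function `Θ(z | F,g,C)`. -/
def gapFn (F : Z → Z) (g : Z → EReal) (C : Set Z) (z : Z) : EReal :=
  ⨆ y ∈ C, Hb F g z y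

/-- The convex subdifferential of an extended-real-valued function. -/
def subdiff (g : Z → EReal) (x : Z) : Set Z :=
  {ξ : Z | ∀ y : Z, ((⟪ξ, y - x⟫ : ℝ) : EReal) + g x ≤ g y}

/-- The solution set `zer(F + ∂g)`. -/
def zerFg (F : Z → Z) (g : Z → EReal) : Set Z := {z : Z | -F z ∈ subdiff g z}

/-- The normal cone to a set `C` at `z`. -/
def normalCone (C : Set Z) (z : Z) : Set Z :=
  {ξ : Z | z ∈ C ∧ ∀ z' ∈ C, ⟪ξ, z' - z⟫ ≤ 0}

/-- The solution set `zer(F + ∂g + N_C)`. -/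
def zerFgN (F : Z → Z) (g : Z → EReal) (C : Set Z) : Set Z :=
  {z : Z | ∃ ξ ∈ subdiff g z, ∃ p ∈ normalCone C z, F z + ξ + p = 0}

/-- The solution set `S₁` of problem (P): points of `S₂` solving the upper HVI over `S₂`. -/
def solP (F₁ : Z → Z) (g₁ : Z → EReal) (S₂ : Set Z) : Set Z :=
  {zs : Z | zs ∈ S₂ ∧ ∀ u ∈ S₂, 0 ≤ Hb F₁ g₁ u zs}

/-- `(α,ρ)`-weak sharpness of the solution set `S` of `HVI(F,g)`. -/
def WeakSharp (F : Z → Z) (g : Z → EReal) (S : Set Z) (α ρ : ℝ) : Prop :=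
  ∀ zs ∈ S, ∀ z ∈ edom g,
    (((α / ρ) * Metric.infDist z S ^ ρ : ℝ) : EReal) ≤ Hb F g z zs

/-- Support function of a set. -/
def suppFn (p : Z) (C : Set Z) : EReal := ⨆ z ∈ C, ((⟪p, z⟫ : ℝ) : EReal)

/-- The Fitzpatrick-type function `φ^{(F,g)}(z,u)`. -/
def phiFn (F : Z → Z) (g : Z → EReal) (z u : Z) : EReal :=
  ⨆ y ∈ edom g, (Hb F g z y + ((⟪y, u⟫ : ℝ) : EReal))

/-- `x = prox_{τ G}(u)`, via the variational characterization
`⟪u - x, v - x⟫ ≤ τ (G v - G x)` for all `v`. -/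
def IsProx (τ : ℝ) (G : Z → EReal) (u x : Z) : Prop :=
  ∀ v : Z, ((⟪u - x, v - x⟫ : ℝ) : EReal) ≤ (τ : EReal) * (G v - G x)

/-- The Tikhonov-regularized operator `V_k = F₂ + σ_k F₁`. -/
def Vop (F₁ F₂ : Z → Z) (σ : ℕ → ℝ) (k : ℕ) (x : Z) : Z := F₂ x + σ k • F₁ x

/-- The Tikhonov-regularized function `G_k = g₂ + σ_k g₁`. -/
def Gfun (g₁ g₂ : Z → EReal) (σ : ℕ → ℝ) (k : ℕ) (v : Z) : EReal :=
  g₂ v + ((σ k : ℝ) : EReal) * g₁ v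

/-- The Attouch–Czarnecki summability condition. -/
def ACcond (F₂ : Z → Z) (g₂ : Z → EReal) (S₂ : Set Z) (t σ : ℕ → ℝ) : Prop :=
  ∀ p : Z, (∃ zs : Z, p ∈ normalCone S₂ zs) →
    ∃ M : ℝ, ∀ K : ℕ,
      (∑ k ∈ Finset.Icc 1 K,
        ((t k : ℝ) : EReal) * ((⨆ zs ∈ S₂, phiFn F₂ g₂ zs (σ k • p)) - suppFn (σ k • p) S₂))
        ≤ (M : EReal)

/-- `T_K = ∑_{k=1}^K t_k`. -/
def Tsum (t : ℕ → ℝ) (K : ℕ) : ℝ := ∑ k ∈ Finset.Icc 1 K, t k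

/-- The ergodic average `z̄^K` (here `w k` plays the role of `z^{k+1/2}`). -/
def zbar (t : ℕ → ℝ) (w : ℕ → Z) (K : ℕ) : Z :=
  (Tsum t K)⁻¹ • ∑ k ∈ Finset.Icc 1 K, t k • w k

/-- Weights `γ_k = 1/∏_{i=1}^k (1 - t_i σ_i μ)` (so `γ_0 = 1`). -/
def gammaW (t σ : ℕ → ℝ) (μ : ℝ) (k : ℕ) : ℝ :=
  (∏ i ∈ Finset.Icc 1 k, (1 - t i * σ i * μ))⁻¹

/-- The weighted ergodic average used in the strongly monotone case. -/
def zbarW (t σ : ℕ → ℝ) (μ : ℝ) (w : ℕ → Z) (K : ℕ) : Z :=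
  (∑ i ∈ Finset.Icc 1 K, t i * σ i * gammaW t σ μ i)⁻¹ •
    ∑ i ∈ Finset.Icc 1 K, (t i * σ i * gammaW t σ μ i) • w i

/-- Convex tangent cone `T_C(x) = cl(⋃_{λ>0} (C - x)/λ)`. -/
def tangentConeCvx (C : Set Z) (x : Z) : Set Z :=
  closure {v : Z | ∃ lam : ℝ, 0 < lam ∧ ∃ c ∈ C, v = lam⁻¹ • (c - x)}

/-- Polar cone of a set. -/
def polarCone (K : Set Z) : Set Z := {z : Z | ∀ x ∈ K, ⟪z, x⟫ ≤ 0}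


private lemma OEG.mul_ne_bot {c : ℝ} (hc : 0 < c) {x : EReal} (hx : x ≠ ⊥) :
    (c:EReal) * x ≠ ⊥ := by
  induction x with
  | bot => exact absurd rfl hx
  | coe r => simp [← EReal.coe_mul]
  | top => simp [EReal.mul_top_of_pos (by exact_mod_cast hc : (0:EReal) < c)]

private lemma OEG.comb (t : ℝ) (ht : 0 < t) (g : EReal) (hg : g ≠ ⊥) (r s : ℝ) :
    (t:EReal)*(g - (r:EReal)) + (t:EReal)*((r:EReal) - (s:EReal)) = (t:EReal)*(g - (s:EReal)) := by
  induction g with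
  | bot => exact absurd rfl hg
  | coe x =>
    rw [← EReal.coe_sub, ← EReal.coe_sub, ← EReal.coe_sub, ← EReal.coe_mul, ← EReal.coe_mul,
      ← EReal.coe_mul, ← EReal.coe_add]
    norm_cast; ring
  | top =>
    rw [EReal.top_sub_coe, EReal.top_sub_coe,
      EReal.mul_top_of_pos (by exact_mod_cast ht : (0:EReal) < t), ← EReal.coe_sub,
      ← EReal.coe_mul, EReal.top_add_coe]

private lemma OEG.key_identity {Z : Type*} [NormedAddCommGroup Z] [InnerProductSpace ℝ Z]
    (zk x x' zz V₁ V₂ : Z) (t : ℝ) :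
    ⟪(zk - t•V₂) - x', zz - x'⟫ + ⟪(zk - t•V₁) - x, x' - x⟫
    = 1/2*‖x'-zz‖^2 - 1/2*‖zk-zz‖^2 + 1/2*‖x-zk‖^2 - t*⟪V₂, zz-x⟫ - t^2/2*‖V₁-V₂‖^2
      + 1/2*‖(x - x') + t•(V₁-V₂)‖^2 := by
  simp only [← real_inner_self_eq_norm_sq]
  simp only [inner_sub_left, inner_sub_right, inner_add_left, inner_add_right,
    real_inner_smul_left, real_inner_smul_right, real_inner_comm x']
  ring_nf
  simp only [real_inner_comm]
  ring

private lemma OEG.prox_finite {Z : Type*} [NormedAddCommGroup Z] [InnerProductSpace ℝ Z]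
    {G : Z → EReal} {τ : ℝ} (hτ : 0 < τ) {u x v₀ : Z} (h : IsProx τ G u x)
    (hv : G v₀ ≠ ⊤) : G x ≠ ⊤ := by
  intro htop
  have h0 := h v₀
  rw [htop, EReal.sub_top, EReal.mul_bot_of_pos (by exact_mod_cast hτ : (0:EReal) < τ)] at h0
  exact absurd (le_bot_iff.mp h0) (EReal.coe_ne_bot _)

/-- per-iteration estimate (Lemma `lem:estimates`(i)) for the
optimistic extragradient iterates. -/
theorem optimistic_extragradient_basic_estimate
    (F₁ F₂ : Z → Z) (LF₁ LF₂ : ℝ) (g₁ g₂ : Z → EReal)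
    (hF₁m : IsMonotoneOp F₁) (hF₂m : IsMonotoneOp F₂)
    (hF₁L : IsLipOp LF₁ F₁) (hF₂L : IsLipOp LF₂ F₂)
    (hg₁ : ProperConvexLsc g₁) (hg₂ : ProperConvexLsc g₂)
    (hdom : (edom g₁ ∩ edom g₂).Nonempty)
    (σ t : ℕ → ℝ) (hσpos : ∀ k, 0 < σ k) (hσdec : Antitone σ) (htpos : ∀ k, 0 < t k)
    (z w : ℕ → Z) (hinit : w 0 = z 1)
    (hw : ∀ k ≥ 1, IsProx (t k) (Gfun g₁ g₂ σ k)
      (z k - t k • Vop F₁ F₂ σ k (w (k - 1))) (w k))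
    (hz : ∀ k ≥ 1, IsProx (t k) (Gfun g₁ g₂ σ k)
      (z k - t k • Vop F₁ F₂ σ k (w k)) (z (k + 1))) :
    ∀ zz : Z, ∀ k ≥ 1,
      ((1 / 2 * ‖z (k + 1) - zz‖ ^ 2 : ℝ) : EReal) ≤
        ((1 / 2 * ‖z k - zz‖ ^ 2 - 1 / 2 * ‖w k - z k‖ ^ 2
          + t k ^ 2 / 2 * ‖Vop F₁ F₂ σ k (w (k - 1)) - Vop F₁ F₂ σ k (w k)‖ ^ 2
          + t k * ⟪Vop F₁ F₂ σ k (w k), zz - w k⟫ : ℝ) : EReal)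
        + (t k : EReal) * (Gfun g₁ g₂ σ k zz - Gfun g₁ g₂ σ k (w k)) := by
  intro zz k hk
  have htk := htpos k
  -- abbreviations
  set G : Z → EReal := Gfun g₁ g₂ σ k with hGdef
  set V₁ : Z := Vop F₁ F₂ σ k (w (k - 1)) with hV1
  set V₂ : Z := Vop F₁ F₂ σ k (w k) with hV2
  -- G never ⊥
  have hGbot : ∀ v, G v ≠ ⊥ := by
    intro v
    have h3 : ((σ k : ℝ):EReal) * g₁ v ≠ ⊥ := OEG.mul_ne_bot (hσpos k) (hg₁.ne_bot v)
    intro hbad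
    rcases EReal.add_eq_bot_iff.mp hbad with h | h
    · exact hg₂.ne_bot v h
    · exact h3 h
  -- G finite somewhere
  obtain ⟨z₀, hz₀1, hz₀2⟩ := hdom
  obtain ⟨a, ha⟩ : ∃ a : ℝ, g₁ z₀ = (a:EReal) :=
    ⟨(g₁ z₀).toReal, (EReal.coe_toReal hz₀1.ne (hg₁.ne_bot z₀)).symm⟩
  obtain ⟨b, hb⟩ : ∃ b : ℝ, g₂ z₀ = (b:EReal) :=
    ⟨(g₂ z₀).toReal, (EReal.coe_toReal hz₀2.ne (hg₂.ne_bot z₀)).symm⟩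
  have hGz₀ : G z₀ ≠ ⊤ := by
    simp only [hGdef, Gfun, ha, hb, ← EReal.coe_mul, ← EReal.coe_add]
    exact EReal.coe_ne_top _
  -- prox hypotheses
  have hwk := hw k hk
  have hzk := hz k hk
  simp only [← hGdef, ← hV1, ← hV2] at hwk hzk
  -- finiteness of G at the prox points
  have hGx' : G (z (k+1)) ≠ ⊤ := OEG.prox_finite htk hzk hGz₀
  have hGx : G (w k) ≠ ⊤ := OEG.prox_finite htk hwk hGz₀
  obtain ⟨r, hr⟩ : ∃ r : ℝ, G (z (k+1)) = (r:EReal) :=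
    ⟨(G (z (k+1))).toReal, (EReal.coe_toReal hGx' (hGbot _)).symm⟩
  obtain ⟨s, hs⟩ : ∃ s : ℝ, G (w k) = (s:EReal) :=
    ⟨(G (w k)).toReal, (EReal.coe_toReal hGx (hGbot _)).symm⟩
  -- the two variational inequalities
  have h₁ := hzk zz
  have h₂ := hwk (z (k+1))
  rw [hr] at h₁
  rw [hr, hs] at h₂
  -- real parts
  set α₁ : ℝ := ⟪(z k - t k • V₂) - z (k+1), zz - z (k+1)⟫ with hα₁
  set α₂ : ℝ := ⟪(z k - t k • V₁) - w k, z (k+1) - w k⟫ with hα₂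
  set B : ℝ := 1 / 2 * ‖z k - zz‖ ^ 2 - 1 / 2 * ‖w k - z k‖ ^ 2
      + t k ^ 2 / 2 * ‖V₁ - V₂‖ ^ 2 + t k * ⟪V₂, zz - w k⟫ with hB
  have hid := OEG.key_identity (z k) (w k) (z (k+1)) zz V₁ V₂ (t k)
  have hreal : 1 / 2 * ‖z (k+1) - zz‖ ^ 2 ≤ B + (α₁ + α₂) := by
    have hsq : (0:ℝ) ≤ 1/2*‖(w k - z (k+1)) + t k • (V₁-V₂)‖^2 := by positivity
    rw [hB, hα₁, hα₂]
    nlinarith [hid, hsq]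
  -- assemble in EReal
  calc ((1 / 2 * ‖z (k + 1) - zz‖ ^ 2 : ℝ) : EReal)
      ≤ ((B + (α₁ + α₂) : ℝ) : EReal) := by exact_mod_cast hreal
    _ = (B : EReal) + ((α₁ : EReal) + (α₂ : EReal)) := by
        rw [← EReal.coe_add, ← EReal.coe_add]
    _ ≤ (B : EReal) + ((t k : EReal) * (G zz - (r:EReal))
          + (t k : EReal) * ((r:EReal) - (s:EReal))) :=
        add_le_add le_rfl (add_le_add h₁ h₂)
    _ = (B : EReal) + (t k : EReal) * (G zz - (s:EReal)) := by
        rw [OEG.comb (t k) htk (G zz) (hGbot zz) r s]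
    _ = _ := by rw [hs]


end
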